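/- If an allocation A of a finite set of goods S among n agents with additive nonnegative valuations is SD-EF1, then A is SD-PROP1. -/
import Mathlib


open Finset
open scoped Classical

noncomputable section

/-- `A` is an allocation of the set of goods `S` among `n` agents. -/
def IsAlloc {G : Type*} (n : ℕ) (S : Finset G) (A : Fin n → Finset G) : Prop :=
  (∀ i j : Fin n, i ≠ j → Disjoint (A i) (A j)) ∧ Finset.univ.biUnion A = S

/-- The top-set `H_i(S,g) = {g' ∈ S : v g' ≥ v g}`. -/
def topSet {G : Type*} (v : G → ℝ) (S : Finset G) (g : G) : Finset G :=
  S.filter (fun g' => v g ≤ v g')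

/-- Stochastic dominance: `X ≽^SD Y` w.r.t. valuation `v` over the set of goods `S`. -/
def SDge {G : Type*} [DecidableEq G] (v : G → ℝ) (S X Y : Finset G) : Prop :=
  ∀ g ∈ S, (Y ∩ topSet v S g).card ≤ (X ∩ topSet v S g).card

/-- The allocation `A` of goods `S` is SD-EF1. -/
def SDEF1 {G : Type*} [DecidableEq G] (n : ℕ) (v : Fin n → G → ℝ) (S : Finset G)
    (A : Fin n → Finset G) : Prop :=
  ∀ i j : Fin n, A j ≠ ∅ → ∃ g ∈ A j, SDge (v i) S (A i) ((A j).erase g)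

/-- The allocation `A` of goods `S` is SD-PROP1: every agent `i` with `A i ≠ S` has a good
`g ∈ S \ A i` such that `|(A i ∪ {g}) ∩ H_i(S,g')| ≥ ⌈|H_i(S,g')| / n⌉` for all `g' ∈ S`. -/
def SDPROP1 {G : Type*} [DecidableEq G] (n : ℕ) (v : Fin n → G → ℝ) (S : Finset G)
    (A : Fin n → Finset G) : Prop :=
  ∀ i : Fin n, A i ≠ S → ∃ g ∈ S \ A i, ∀ g' ∈ S,
    Nat.ceil (((topSet (v i) S g').card : ℚ) / n) ≤ ((insert g (A i)) ∩ topSet (v i) S g').card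

/-- Every SD-EF1 allocation is SD-PROP1. -/
theorem sdprop1_of_sdef1
    {G : Type*} [DecidableEq G] (n : ℕ) (hn : 0 < n)
    (S : Finset G) (v : Fin n → G → ℝ)
    (hv : ∀ i : Fin n, ∀ g ∈ S, 0 ≤ v i g)
    (A : Fin n → Finset G) (hA : IsAlloc n S A)
    (hsd : SDEF1 n v S A) :
    SDPROP1 n v S A := by
  intro i hi
  have hsubS : ∀ j : Fin n, A j ⊆ S := by
    intro j x hx
    rw [← hA.2]
    simp only [Finset.mem_biUnion]
    exact ⟨j, mem_univ j, hx⟩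
  obtain ⟨j0, hj0ne, hj0⟩ : ∃ j : Fin n, j ≠ i ∧ A j ≠ ∅ := by
    by_contra h
    push_neg at h
    apply hi
    apply Finset.Subset.antisymm (hsubS i)
    intro x hx
    rw [← hA.2] at hx
    simp only [Finset.mem_biUnion] at hx
    obtain ⟨j, _, hxj⟩ := hx
    by_cases hji : j = i
    · exact hji ▸ hxj
    · exact absurd hxj (by rw [h j hji]; exact notMem_empty x)
  set T : Finset G := S.filter
    (fun g => ∃ j : Fin n, j ≠ i ∧ g ∈ A j ∧ SDge (v i) S (A i) ((A j).erase g)) with hT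
  have hTne : T.Nonempty := by
    obtain ⟨g0, hg0, hsd0⟩ := hsd i j0 hj0
    exact ⟨g0, mem_filter.2 ⟨hsubS j0 hg0, j0, hj0ne, hg0, hsd0⟩⟩
  obtain ⟨g, hgT, hgmax⟩ := T.exists_max_image (v i) hTne
  obtain ⟨hgS, jg, hjgne, hgAj, -⟩ := mem_filter.1 hgT
  have hgnotAi : g ∉ A i := fun hgi => (Finset.disjoint_left.1 (hA.1 jg i hjgne) hgAj) hgi
  refine ⟨g, mem_sdiff.2 ⟨hgS, hgnotAi⟩, ?_⟩
  intro g' hg'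
  set H := topSet (v i) S g' with hH
  have hHsub : H ⊆ S := filter_subset _ _
  have hperj : ∀ j : Fin n, (A j ∩ H).card ≤ ((insert g (A i)) ∩ H).card := by
    intro j
    by_cases hji : j = i
    · subst hji
      exact card_le_card (inter_subset_inter (subset_insert _ _) (Subset.refl _))
    · by_cases hje : A j = ∅
      · simp [hje]
      · obtain ⟨gj, hgjAj, hsdj⟩ := hsd i j hje
        have hgjT : gj ∈ T := mem_filter.2 ⟨hsubS j hgjAj, j, hji, hgjAj, hsdj⟩
        have hle := hsdj g' hg'
        by_cases hgH : g ∈ H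
        · have h1 : A j ∩ H ⊆ insert gj ((A j).erase gj ∩ H) := by
            intro x hx
            rcases mem_inter.1 hx with ⟨hx1, hx2⟩
            by_cases hxg : x = gj
            · simp [hxg]
            · exact mem_insert_of_mem (mem_inter.2 ⟨mem_erase.2 ⟨hxg, hx1⟩, hx2⟩)
          calc (A j ∩ H).card ≤ (insert gj ((A j).erase gj ∩ H)).card := card_le_card h1
            _ ≤ ((A j).erase gj ∩ H).card + 1 := card_insert_le _ _
            _ ≤ (A i ∩ H).card + 1 := by rw [hH]; exact Nat.add_le_add_right hle 1
            _ = (insert g (A i) ∩ H).card := by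
                rw [insert_inter_of_mem hgH,
                  card_insert_of_notMem (fun hx => hgnotAi (mem_inter.1 hx).1)]
        · have hgjH : gj ∉ H := by
            intro hgj
            apply hgH
            have hv' : v i g' ≤ v i gj := by
              have := mem_filter.1 (hH ▸ hgj)
              simpa [topSet] using this.2
            exact hH ▸ mem_filter.2 ⟨hgS, le_trans hv' (hgmax gj hgjT)⟩
          have h1 : A j ∩ H ⊆ (A j).erase gj ∩ H := by
            intro x hx
            rcases mem_inter.1 hx with ⟨hx1, hx2⟩
            exact mem_inter.2 ⟨mem_erase.2 ⟨fun h => hgjH (h ▸ hx2), hx1⟩, hx2⟩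
          calc (A j ∩ H).card ≤ ((A j).erase gj ∩ H).card := card_le_card h1
            _ ≤ (A i ∩ H).card := by rw [hH]; exact hle
            _ ≤ (insert g (A i) ∩ H).card :=
                card_le_card (inter_subset_inter (subset_insert _ _) (Subset.refl _))
  have hHeq : H = Finset.univ.biUnion (fun j => A j ∩ H) := by
    apply Finset.Subset.antisymm
    · intro x hx
      have hxS : x ∈ S := hHsub hx
      rw [← hA.2] at hxS
      simp only [Finset.mem_biUnion] at hxS ⊢
      obtain ⟨j, _, hxj⟩ := hxS
      exact ⟨j, mem_univ j, mem_inter.2 ⟨hxj, hx⟩⟩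
    · intro x hx
      simp only [Finset.mem_biUnion] at hx
      obtain ⟨j, _, hxj⟩ := hx
      exact (mem_inter.1 hxj).2
  have hcard : H.card = ∑ j : Fin n, (A j ∩ H).card := by
    nth_rewrite 1 [hHeq]
    exact card_biUnion (fun j _ j' _ hjj' =>
      disjoint_of_subset_left inter_subset_left
        (disjoint_of_subset_right inter_subset_left (hA.1 j j' hjj')))
  have hmain : H.card ≤ n * (insert g (A i) ∩ H).card := by
    rw [hcard]
    calc ∑ j : Fin n, (A j ∩ H).card ≤ ∑ _j : Fin n, (insert g (A i) ∩ H).card :=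
          Finset.sum_le_sum (fun j _ => hperj j)
      _ = n * (insert g (A i) ∩ H).card := by simp [mul_comm]
  rw [Nat.ceil_le, div_le_iff₀ (by exact_mod_cast hn)]
  exact_mod_cast hmain.trans (le_of_eq (mul_comm _ _))
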